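/- Let n ≥ 1 and let x⁽¹⁾,…,x⁽ⁿ⁺¹⁾ be the vertices of a regular simplex inscribed into the ball B(x⁰;R) in ℝⁿ, with basic Lagrange polynomials λ₁,…,λ_{n+1}. Let m be an integer with 1 ≤ m ≤ (n+1)/2, let A ⊆ {1,…,n+1} with |A| = m, let g be the centroid of {x⁽ʲ⁾ : j ∈ A}, let h be the centroid of {x⁽ʲ⁾ : j ∉ A}, and let y be the unique point with ‖y − x⁰‖ = R of the form y = g + t(h − g) with t > 0. Then Σ_{j=1}^{n+1} |λⱼ(y)| ≥ ψ(m), where ψ(t) = (2√n/(n+1))·√(t(n+1−t)) + |1 − 2t/(n+1)|. -/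

import Mathlib

open Finset RealInnerProductSpace

/-- ψ(t) = (2√n/(n+1))·√(t(n+1−t)) + |1 − 2t/(n+1)|. -/
noncomputable def psi (n : ℕ) (t : ℝ) : ℝ :=
  2 * Real.sqrt n / (n + 1) * Real.sqrt (t * (n + 1 - t)) + |1 - 2 * t / (n + 1)|

/-- `lam` is the family of basic Lagrange polynomials (barycentric coordinates)
of the simplex with vertices `x`. -/
def IsLagrangeBasis {n : ℕ} (x : Fin (n + 1) → EuclideanSpace ℝ (Fin n))
    (lam : Fin (n + 1) → EuclideanSpace ℝ (Fin n) → ℝ) : Prop :=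
  ∀ j, (∃ L : EuclideanSpace ℝ (Fin n) →ᵃ[ℝ] ℝ, lam j = ⇑L) ∧
    ∀ i, lam j (x i) = if i = j then 1 else 0


private lemma aux_final {n m : ℕ} (hn : 1 ≤ n) (hm1 : 1 ≤ m) (hm2 : 2 * m ≤ n + 1)
    {t : ℝ} (ht : 0 < t)
    (key : (((n:ℝ) + 1 - (m:ℝ)) - ((n:ℝ)+1)*t)^2 = (n:ℝ) * (m:ℝ) * ((n:ℝ) + 1 - (m:ℝ))) :
    |1-t| + t ≥ psi n m := by
  set N : ℝ := (n : ℝ) with hNdef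
  set M : ℝ := (m : ℝ) with hMdef
  set M' : ℝ := N + 1 - M with hM'def
  have hN1 : (1:ℝ) ≤ N := by rw [hNdef]; exact_mod_cast hn
  have hM1 : (1:ℝ) ≤ M := by rw [hMdef]; exact_mod_cast hm1
  have hMM' : 2 * M ≤ N + 1 := by rw [hNdef, hMdef]; exact_mod_cast hm2
  have hM'1 : (1:ℝ) ≤ M' := by rw [hM'def]; linarith
  have hMpos : (0:ℝ) < M := by linarith
  have hM'pos : (0:ℝ) < M' := by linarith
  set r : ℝ := Real.sqrt (N*M*M') with hrdef
  have hNMM' : (0:ℝ) ≤ N*M*M' := by positivity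
  have hr0 : 0 ≤ r := Real.sqrt_nonneg _
  have hr2 : r^2 = N*M*M' := Real.sq_sqrt hNMM'
  have habs : |M' - (N+1)*t| = r := by
    rw [← Real.sqrt_sq_eq_abs, key, hrdef]
  have hrM' : M' ≤ r := by
    have h1 : M' ≤ N*M := by
      nlinarith [mul_nonneg (by linarith : (0:ℝ) ≤ N+1) (by linarith : (0:ℝ) ≤ M-1)]
    have h2 : M'^2 ≤ r^2 := by
      rw [hr2]
      nlinarith [mul_le_mul_of_nonneg_right h1 hM'pos.le]
    nlinarith [h2, hr0, hM'pos]
  have hrM : M ≤ r := by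
    have h1 : M ≤ N*M' := by
      have h0 := mul_le_mul_of_nonneg_right hN1 hM'pos.le
      rw [one_mul] at h0
      linarith
    have h2 : M^2 ≤ r^2 := by
      rw [hr2]
      nlinarith [mul_le_mul_of_nonneg_right h1 hMpos.le]
    nlinarith [h2, hr0, hMpos]
  have hNt : (N+1)*t = M' + r := by
    rcases (abs_eq hr0).mp habs with hcc | hcc
    · exfalso
      nlinarith [mul_pos (by linarith : (0:ℝ) < N+1) ht, hrM']
    · linarith
  have ht1 : 1 ≤ t := by
    have h4 : (N+1)*1 ≤ (N+1)*t := by rw [mul_one]; linarith [hrM, hNt]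
    exact le_of_mul_le_mul_left h4 (by linarith : (0:ℝ) < N+1)
  have hsum2 : |1-t| + t = 2*t - 1 := by
    rw [abs_of_nonpos (by linarith)]; ring
  have hpsi : psi n m = (2*r + (N+1) - 2*M)/(N+1) := by
    show 2 * Real.sqrt n / ((n:ℝ) + 1) * Real.sqrt (m * ((n:ℝ) + 1 - m)) +
      |1 - 2 * (m:ℝ) / ((n:ℝ) + 1)| = (2*r + (N+1) - 2*M)/(N+1)
    rw [← hNdef, ← hMdef, ← hM'def]
    have h2 : Real.sqrt N * Real.sqrt (M*M') = r := by
      rw [← Real.sqrt_mul (by linarith), hrdef, mul_assoc]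
    have h3 : |1 - 2*M/(N+1)| = 1 - 2*M/(N+1) := abs_of_nonneg (by
      rw [sub_nonneg, div_le_one (by linarith)]; linarith)
    rw [h3, show 2*Real.sqrt N/(N+1)*Real.sqrt (M*M') = 2*r/(N+1) from by rw [← h2]; ring]
    field_simp
    ring
  rw [hsum2, hpsi, ge_iff_le, div_le_iff₀ (by linarith : (0:ℝ) < N+1),
    show (2*t-1)*(N+1) = 2*((N+1)*t) - (N+1) from by ring]
  linarith [hNt]

set_option maxHeartbeats 1000000 in
theorem lambda_at_y_ge_psi_m
    {n : ℕ} (hn : 1 ≤ n)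
    (x0 : EuclideanSpace ℝ (Fin n)) (R : ℝ) (hR : 0 < R)
    (x : Fin (n + 1) → EuclideanSpace ℝ (Fin n))
    (hind : AffineIndependent ℝ x)
    (hreg : ∃ d : ℝ, ∀ i j, i ≠ j → dist (x i) (x j) = d)
    (hins : ∀ j, dist (x j) x0 = R)
    (lam : Fin (n + 1) → EuclideanSpace ℝ (Fin n) → ℝ)
    (hlam : IsLagrangeBasis x lam)
    (m : ℕ) (hm1 : 1 ≤ m) (hm2 : 2 * m ≤ n + 1)
    (A : Finset (Fin (n + 1))) (hA : A.card = m)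
    (g h : EuclideanSpace ℝ (Fin n))
    (hg : g = Finset.centroid ℝ A x)
    (hh : h = Finset.centroid ℝ Aᶜ x)
    (y : EuclideanSpace ℝ (Fin n)) (t : ℝ) (ht : 0 < t)
    (hy : y = g + t • (h - g)) (hyR : dist y x0 = R) :
    ∑ j, |lam j y| ≥ psi n m := by
  obtain ⟨d, hd⟩ := hreg
  set v : Fin (n+1) → EuclideanSpace ℝ (Fin n) := fun i => x i - x0 with hvdef
  have hv : ∀ i, ‖v i‖ = R := fun i => by
    rw [hvdef]; simpa [dist_eq_norm] using hins i
  set c : ℝ := R^2 - d^2/2 with hcdef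
  have hc : ∀ i j, i ≠ j → ⟪v i, v j⟫ = c := by
    intro i j hij
    have h1 : ‖v i - v j‖ = d := by
      simpa [hvdef, dist_eq_norm, sub_sub_sub_cancel_right] using hd i j hij
    have := norm_sub_sq_real (v i) (v j)
    rw [h1, hv i, hv j] at this
    rw [hcdef]; linarith
  set s : EuclideanSpace ℝ (Fin n) := ∑ j, v j with hsdef
  have hsi : ∀ i, ⟪v i, s⟫ = R^2 + n * c := by
    intro i
    rw [hsdef, inner_sum]
    have : ∀ j, ⟪v i, v j⟫ = c + (if j = i then R^2 - c else 0) := by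
      intro j
      by_cases hji : j = i
      · subst hji
        rw [real_inner_self_eq_norm_sq, hv j, if_pos rfl]; ring
      · simp [hji, hc i j (fun hh => hji hh.symm)]
    rw [Finset.sum_congr rfl fun j _ => this j, Finset.sum_add_distrib,
      Finset.sum_const, Finset.sum_ite_eq' Finset.univ i (fun _ => R^2 - c)]
    simp [Finset.card_univ]
    ring
  have hs0 : s = 0 := by
    have hli := (affineIndependent_iff_linearIndependent_vsub ℝ x 0).mp hind
    have hcard : Fintype.card {j : Fin (n+1) // j ≠ (0 : Fin (n+1))} =
        Module.finrank ℝ (EuclideanSpace ℝ (Fin n)) := by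
      rw [finrank_euclideanSpace_fin, Fintype.card_subtype_compl, Fintype.card_subtype_eq,
        Fintype.card_fin]
      omega
    have hspan := hli.span_eq_top_of_card_eq_finrank' hcard
    have horth : ∀ z, z ∈ Submodule.span ℝ
        (Set.range fun i : {j : Fin (n+1) // j ≠ (0:Fin (n+1))} => x i -ᵥ x 0) → ⟪z, s⟫ = 0 := by
      intro z hz
      induction hz using Submodule.span_induction with
      | mem z hz =>
        obtain ⟨i, rfl⟩ := hz
        show ⟪x (i : Fin (n+1)) -ᵥ x 0, s⟫ = 0
        have : x (i : Fin (n+1)) -ᵥ x 0 = v i - v 0 := by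
          simp [hvdef, vsub_eq_sub]
        rw [this, inner_sub_left, hsi _, hsi 0, sub_self]
      | zero => simp
      | add a b _ _ ha hb => rw [inner_add_left, ha, hb, add_zero]
      | smul r a _ ha => rw [real_inner_smul_left, ha, mul_zero]
    have : ⟪s, s⟫ = 0 := horth s (by rw [hspan]; trivial)
    exact inner_self_eq_zero.mp this
  have hnne : (n:ℝ) ≠ 0 := by positivity
  have hcn : c = -R^2 / n := by
    have h0 := hsi 0
    rw [hs0] at h0
    simp at h0
    field_simp
    linarith
  -- real constants
  set N : ℝ := (n : ℝ) with hNdef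
  set M : ℝ := (m : ℝ) with hMdef
  set M' : ℝ := N + 1 - M with hM'def
  have hN1 : (1:ℝ) ≤ N := by rw [hNdef]; exact_mod_cast hn
  have hM1 : (1:ℝ) ≤ M := by rw [hMdef]; exact_mod_cast hm1
  have hMM' : 2 * M ≤ N + 1 := by
    rw [hNdef, hMdef]; exact_mod_cast hm2
  have hM'1 : (1:ℝ) ≤ M' := by rw [hM'def]; linarith
  have hMpos : (0:ℝ) < M := by linarith
  have hM'pos : (0:ℝ) < M' := by linarith
  have hAcard : Aᶜ.card = n + 1 - m := by
    rw [Finset.card_compl, hA, Fintype.card_fin]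
  have hAcardR : ((Aᶜ.card : ℕ) : ℝ) = M' := by
    rw [hAcard, hM'def, hNdef, hMdef]
    push_cast [Nat.cast_sub (by omega : m ≤ n + 1)]
    ring
  have hAne : A.Nonempty := Finset.card_pos.mp (by omega)
  have hAcne : Aᶜ.Nonempty := Finset.card_pos.mp (by rw [hAcard]; omega)
  -- the vector S
  set S : EuclideanSpace ℝ (Fin n) := ∑ j ∈ A, v j with hSdef
  have hSB : ∑ j ∈ Aᶜ, v j = -S := by
    have h1 : S + ∑ j ∈ Aᶜ, v j = s := by
      rw [hSdef, hsdef]; exact Finset.sum_add_sum_compl A v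
    rw [hs0] at h1
    exact eq_neg_of_add_eq_zero_right h1
  have hS2 : ⟪S, S⟫ = R^2 * M * M' / N := by
    rw [hSdef, sum_inner]
    have hterm : ∀ j ∈ A, ⟪v j, ∑ i ∈ A, v i⟫ = M * c + (R^2 - c) := by
      intro j hj
      rw [inner_sum]
      have : ∀ i, ⟪v j, v i⟫ = c + (if i = j then R^2 - c else 0) := by
        intro i
        by_cases hij : i = j
        · subst hij
          rw [real_inner_self_eq_norm_sq, hv i, if_pos rfl]; ring
        · simp [hij, hc j i (fun hh => hij hh.symm)]
      rw [Finset.sum_congr rfl fun i _ => this i, Finset.sum_add_distrib,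
        Finset.sum_const, Finset.sum_ite_eq' A j (fun _ => R^2 - c), if_pos hj, hA]
      rw [hMdef]
      simp [nsmul_eq_mul]
    rw [Finset.sum_congr rfl hterm, Finset.sum_const, hA, nsmul_eq_mul, ← hMdef]
    rw [hcn, hM'def, hNdef]
    field_simp
    ring
  -- centroids as multiples of S
  have hcentroid : ∀ B : Finset (Fin (n+1)), B.Nonempty →
      Finset.centroid ℝ B x - x0 = ((B.card : ℝ))⁻¹ • ∑ j ∈ B, v j := by
    intro B hB
    have hw := B.sum_centroidWeights_eq_one_of_nonempty ℝ hB
    rw [Finset.centroid_def, Finset.affineCombination_eq_linear_combination _ _ _ hw]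
    have hcB : ((B.card : ℝ)) ≠ 0 := by
      simpa using Finset.card_ne_zero_of_mem hB.choose_spec
    simp only [Finset.centroidWeights_apply, hvdef]
    rw [← Finset.smul_sum, Finset.sum_sub_distrib, smul_sub, Finset.sum_const]
    rw [← Nat.cast_smul_eq_nsmul ℝ, smul_smul, inv_mul_cancel₀ hcB, one_smul]
  have hgx : g - x0 = M⁻¹ • S := by
    rw [hg, hcentroid A hAne, hA, hSdef, hMdef]
  have hhx : h - x0 = -(M'⁻¹ • S) := by
    rw [hh, hcentroid Aᶜ hAcne, hAcardR, hSB, smul_neg]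
  set q : ℝ := (1-t)/M - t/M' with hqdef
  have hyx : y - x0 = q • S := by
    have h1 : y - x0 = (1-t) • (g - x0) + t • (h - x0) := by
      rw [hy]; module
    rw [h1, hgx, hhx, smul_neg, smul_smul, smul_smul, ← sub_eq_add_neg, ← sub_smul, hqdef,
      div_eq_mul_inv, div_eq_mul_inv]
  have hyR2 : q^2 * (R^2*M*M'/N) = R^2 := by
    have h2 : ‖y - x0‖ = R := by rw [← dist_eq_norm]; exact hyR
    have h3 : ⟪y-x0, y-x0⟫ = R^2 := by rw [real_inner_self_eq_norm_sq, h2]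
    rw [hyx, real_inner_smul_left, real_inner_smul_right, hS2] at h3
    linear_combination h3
  have key : (M' - (N+1)*t)^2 = N * M * M' := by
    have hq2 : q^2 * (M*M') = N := by
      have e1 := hyR2
      field_simp at e1
      have e2 : q^2*(M*M') * R^2 = N * R^2 := by
        linear_combination R^2 * e1
      exact mul_right_cancel₀ (by positivity) e2
    have h1 : q * (M*M') = M' - (N+1)*t := by
      rw [hqdef, hM'def]
      field_simp [show N + 1 - M ≠ 0 by linarith, show 1 + N - M ≠ 0 by linarith]
      ring
    calc (M' - (N+1)*t)^2 = (q*(M*M'))^2 := by rw [h1]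
      _ = q^2*(M*M')*(M*M') := by ring
      _ = N*(M*M') := by rw [hq2]
      _ = N*M*M' := by ring
  -- values of the Lagrange polynomials at y
  have hlamval : ∀ j, lam j y = if j ∈ A then (1-t)/M else t/M' := by
    intro j
    obtain ⟨⟨L, hL⟩, hval⟩ := hlam j
    have hLg : L g = (if j ∈ A then M⁻¹ else 0) := by
      rw [hg, Finset.centroid_def,
        A.map_affineCombination x _ (A.sum_centroidWeights_eq_one_of_nonempty ℝ hAne) L,
        Finset.affineCombination_eq_linear_combination _ _ _
          (A.sum_centroidWeights_eq_one_of_nonempty ℝ hAne)]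
      simp only [Finset.centroidWeights_apply, Function.comp_apply]
      have hrw : ∀ i ∈ A, ((A.card:ℝ))⁻¹ • L (x i) = (if i = j then ((A.card:ℝ))⁻¹ else 0) := by
        intro i _
        rw [smul_eq_mul, ← hL, hval i, mul_ite, mul_one, mul_zero]
      rw [Finset.sum_congr rfl hrw, Finset.sum_ite_eq' A j _, hA, hMdef]
    have hLh : L h = (if j ∈ Aᶜ then M'⁻¹ else 0) := by
      rw [hh, Finset.centroid_def,
        Aᶜ.map_affineCombination x _ (Aᶜ.sum_centroidWeights_eq_one_of_nonempty ℝ hAcne) L,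
        Finset.affineCombination_eq_linear_combination _ _ _
          (Aᶜ.sum_centroidWeights_eq_one_of_nonempty ℝ hAcne)]
      simp only [Finset.centroidWeights_apply, Function.comp_apply]
      have hrw : ∀ i ∈ Aᶜ, ((Aᶜ.card:ℝ))⁻¹ • L (x i) = (if i = j then ((Aᶜ.card:ℝ))⁻¹ else 0) := by
        intro i _
        rw [smul_eq_mul, ← hL, hval i, mul_ite, mul_one, mul_zero]
      rw [Finset.sum_congr rfl hrw, Finset.sum_ite_eq' Aᶜ j _, hAcardR]
    have hLy : L y = L g + t * (L h - L g) := by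
      have e : y = t • (h -ᵥ g) +ᵥ g := by rw [hy, vadd_eq_add, vsub_eq_sub, add_comm]
      rw [e, AffineMap.map_vadd, map_smul, AffineMap.linearMap_vsub, vadd_eq_add,
        vsub_eq_sub, smul_eq_mul]
      ring
    rw [hL, hLy, hLg, hLh]
    by_cases hjA : j ∈ A
    · rw [if_pos hjA, if_neg (fun hcon => (Finset.mem_compl.mp hcon) hjA), if_pos hjA]
      field_simp
      ring
    · rw [if_neg hjA, if_pos (Finset.mem_compl.mpr hjA), if_neg hjA]
      field_simp
      ring
  -- sum of absolute values
  have hsum : ∑ j, |lam j y| = |1-t| + t := by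
    have habs' : ∀ j, |lam j y| = if j ∈ A then |1-t|/M else t/M' := by
      intro j
      rw [hlamval j]
      by_cases hjA : j ∈ A
      · rw [if_pos hjA, if_pos hjA, abs_div, abs_of_pos hMpos]
      · rw [if_neg hjA, if_neg hjA, abs_of_pos (by positivity)]
    rw [Finset.sum_congr rfl fun j _ => habs' j, ← Finset.sum_add_sum_compl A,
      Finset.sum_congr rfl (fun j hj => if_pos hj),
      Finset.sum_congr rfl (fun j hj => if_neg (Finset.mem_compl.mp hj)),
      Finset.sum_const, Finset.sum_const, nsmul_eq_mul, nsmul_eq_mul, hAcardR, hA, hMdef]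
    field_simp
  rw [hsum]
  exact aux_final hn hm1 hm2 ht key
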